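/- Let S be a finite set of nonempty words over Σ such that S* is co-finite in Σ* and S* ≠ Σ*. Then for every x ∈ S there exists x' ∈ S such that x is a proper prefix of x' or x' is a proper prefix of x; similarly, for every x ∈ S there exists x' ∈ S such that x is a proper suffix of x' or x' is a proper suffix of x. -/

import Mathlib

open Computability

private lemma strip_prefix_aux {α : Type} (S : Language α) (x : List α)
    (hxne : x ≠ [])
    (hcomp : ∀ y ∈ S, (x <+: y ∨ y <+: x) → y = x) :
    ∀ u : List α, x ++ u ∈ (S∗ : Language α) → u ∈ (S∗ : Language α) := by
  intro u hu
  rw [Language.mem_kstar] at hu ⊢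
  obtain ⟨L, hL, hmem⟩ := hu
  cases L with
  | nil =>
    simp only [List.flatten_nil] at hL
    exact absurd (List.append_eq_nil_iff.mp hL).1 hxne
  | cons y L' =>
    have hyS : y ∈ S := hmem y (by simp)
    rw [List.flatten_cons] at hL
    have hy1 : y <+: x ++ u := ⟨L'.flatten, hL.symm⟩
    have hx1 : x <+: x ++ u := List.prefix_append x u
    have hyx : y = x := hcomp y hyS (List.prefix_or_prefix_of_prefix hx1 hy1)
    subst hyx
    have : u = L'.flatten := List.append_cancel_left hL
    exact ⟨L', this, fun z hz => hmem z (List.mem_cons_of_mem _ hz)⟩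

private lemma prefix_part_aux {α : Type} (S : Language α)
    (hcof : Set.Finite ((S∗ : Language α)ᶜ))
    (hproper : (S∗ : Language α) ≠ (Set.univ : Set (List α)))
    (x : List α) (hx : x ∈ S) (hxne : x ≠ []) :
    ∃ x' ∈ S, (x <+: x' ∧ x ≠ x') ∨ (x' <+: x ∧ x' ≠ x) := by
  by_contra h
  push_neg at h
  have hcomp : ∀ y ∈ S, (x <+: y ∨ y <+: x) → y = x := by
    intro y hy hyx
    rcases hyx with h1 | h1
    · exact ((h y hy).1 h1).symm
    · exact (h y hy).2 h1
  obtain ⟨u, hu⟩ := Set.ne_univ_iff_exists_notMem _ |>.mp hproper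
  set f : ℕ → List α := fun k => (List.replicate k x).flatten ++ u with hf
  have hnotin : ∀ k, f k ∉ (S∗ : Language α) := by
    intro k
    induction k with
    | zero => simp only [hf, List.replicate_zero, List.flatten_nil, List.nil_append]; exact hu
    | succ n ih =>
      intro hmem
      apply ih
      have heq : f (n + 1) = x ++ f n := by
        simp [hf, List.replicate_succ, List.append_assoc]
      rw [heq] at hmem
      exact strip_prefix_aux S x hxne hcomp _ hmem
  have hinj : Function.Injective f := by
    intro a b hab
    have hlen := congrArg List.length hab
    have hxpos : 0 < x.length := List.length_pos_iff.mpr hxne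
    simp [hf, List.length_flatten, List.length_replicate] at hlen
    rcases hlen with h' | h'
    · exact h'
    · exact absurd h' hxne
  have hsub : ((S∗ : Language α)ᶜ : Set (List α)) ⊇ Set.range f := by
    rintro _ ⟨k, rfl⟩; exact hnotin k
  exact (Set.infinite_range_of_injective hinj) (hcof.subset hsub)

private lemma kstar_reverse_aux {α : Type} (S T : Language α)
    (hT : ∀ w : List α, w ∈ T ↔ w.reverse ∈ S) (w : List α)
    (hw : w ∈ (S∗ : Language α)) :
    w.reverse ∈ (T∗ : Language α) := by
  rw [Language.mem_kstar] at hw ⊢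
  obtain ⟨L, rfl, hmem⟩ := hw
  refine ⟨(L.map List.reverse).reverse, List.reverse_flatten, ?_⟩
  intro y hy
  rw [List.mem_reverse, List.mem_map] at hy
  obtain ⟨z, hz, rfl⟩ := hy
  rw [hT, List.reverse_reverse]
  exact hmem z hz

private lemma kstar_reverse_iff {α : Type} (S T : Language α)
    (hT : ∀ w : List α, w ∈ T ↔ w.reverse ∈ S) (w : List α) :
    w ∈ (S∗ : Language α) ↔ w.reverse ∈ (T∗ : Language α) := by
  constructor
  · exact kstar_reverse_aux S T hT w
  · intro h
    have hT' : ∀ w : List α, w ∈ S ↔ w.reverse ∈ T := by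
      intro v
      rw [hT v.reverse, List.reverse_reverse]
    have := kstar_reverse_aux T S hT' w.reverse h
    rwa [List.reverse_reverse] at this

/-- If `S` is a finite set of nonempty words with `S∗` co-finite and
`S∗ ≠ Σ∗`, then every `x ∈ S` is a proper prefix of some `x' ∈ S` or vice versa, and
likewise for suffixes. -/
theorem proper_prefix_suffix_of_cofinite {α : Type} (S : Language α)
    (hfin : S.Finite) (hne : ∀ w ∈ S, w ≠ [])
    (hcof : Set.Finite ((S∗ : Language α)ᶜ))
    (hproper : (S∗ : Language α) ≠ (Set.univ : Set (List α))) :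
    ∀ x ∈ S,
      (∃ x' ∈ S, (x <+: x' ∧ x ≠ x') ∨ (x' <+: x ∧ x' ≠ x)) ∧
      (∃ x' ∈ S, (x <:+ x' ∧ x ≠ x') ∨ (x' <:+ x ∧ x' ≠ x)) := by
  intro x hx
  constructor
  · exact prefix_part_aux S hcof hproper x hx (hne x hx)
  · -- suffix part via reversal
    set S' : Language α := {w : List α | w.reverse ∈ S} with hS'
    have hT : ∀ w : List α, w ∈ S' ↔ w.reverse ∈ S := fun w => Iff.rfl
    have hiff := kstar_reverse_iff S S' hT
    have hcof' : Set.Finite ((S'∗ : Language α)ᶜ) := by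
      have hsub : ((S'∗ : Language α)ᶜ : Set (List α)) ⊆
          List.reverse '' ((S∗ : Language α)ᶜ : Set (List α)) := by
        intro w hw
        refine ⟨w.reverse, ?_, List.reverse_reverse w⟩
        intro hmem
        have := (hiff w.reverse).mp hmem
        rw [List.reverse_reverse] at this
        exact hw this
      exact (hcof.image _).subset hsub
    have hproper' : (S'∗ : Language α) ≠ (Set.univ : Set (List α)) := by
      obtain ⟨u, hu⟩ := Set.ne_univ_iff_exists_notMem _ |>.mp hproper
      refine (Set.ne_univ_iff_exists_notMem _).mpr ⟨u.reverse, ?_⟩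
      intro hmem
      exact hu ((hiff u).mpr hmem)
    have hx' : x.reverse ∈ S' := by
      rw [hT, List.reverse_reverse]; exact hx
    have hxne' : x.reverse ≠ [] := by
      simpa using hne x hx
    obtain ⟨y, hy, hcase⟩ := prefix_part_aux S' hcof' hproper' x.reverse hx' hxne'
    have hzS : y.reverse ∈ S := (hT y).mp hy
    refine ⟨y.reverse, hzS, ?_⟩
    have hxr : x = x.reverse.reverse := (List.reverse_reverse x).symm
    rcases hcase with ⟨h1, h2⟩ | ⟨h1, h2⟩
    · refine Or.inl ⟨?_, ?_⟩
      · rw [hxr]; exact List.reverse_prefix.mp (by simpa using h1)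
      · intro he; exact h2 (by rw [he, List.reverse_reverse])
    · refine Or.inr ⟨?_, ?_⟩
      · rw [hxr]; exact List.reverse_prefix.mp (by simpa using h1)
      · intro he; exact h2 (by rw [← he, List.reverse_reverse])
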